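/- arXiv:2411.19839 — 5 statements merged into one kernel-verified Lean document; each statement's English description precedes it below -/
import Mathlib

section
/- Let κ be an infinite regular cardinal and let E be a closed subset of the generalized Baire space ^κκ. Then there exists a subset X ⊆ E of cardinality at most κ^{<κ} such that E \ X is closed and has no isolated points (i.e., E \ X is perfect, possibly empty). -/
open Cardinal Set Topology

/-- A node of the tree `^{<κ}λ`: a function from a proper initial segment of `K` to `L`. -/
abbrev GNode (K L : Type) [LinearOrder K] : Type := Σ a : K, (Set.Iio a → L)

/-- The initial-segment (extension) order on nodes. -/
def gnle {K L : Type} [LinearOrder K] (s t : GNode K L) : Prop :=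
  ∃ h : s.1 ≤ t.1, ∀ i : Set.Iio s.1, s.2 i = t.2 ⟨i.1, lt_of_lt_of_le i.2 h⟩

/-- The restriction of `x : K → L` to the initial segment below `a`. -/
def grestr {K L : Type} [LinearOrder K] (x : K → L) (a : K) : GNode K L :=
  ⟨a, fun i => x i.1⟩

/-- The basic open set `N_σ` determined by a node `σ`. -/
def gNbhd {K L : Type} [LinearOrder K] (s : GNode K L) : Set (K → L) :=
  {x | ∀ i : Set.Iio s.1, s.2 i = x i.1}

/-- The `<κ`-box topology on `^κλ`, generated by the basic open sets `N_σ`. -/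
def gtopo (K L : Type) [LinearOrder K] : TopologicalSpace (K → L) :=
  .generateFrom {U | ∃ s : GNode K L, U = gNbhd s}

/-- A subtree of `^{<κ}λ`: a set of nodes closed under initial segments. -/
def gIsTree {K L : Type} [LinearOrder K] (T : Set (GNode K L)) : Prop :=
  ∀ s t : GNode K L, gnle s t → t ∈ T → s ∈ T

/-- `[T]`: the set of `x : K → L` all of whose proper initial segments lie in `T`. -/
def gBr {K L : Type} [LinearOrder K] (T : Set (GNode K L)) : Set (K → L) :=
  {x | ∀ a : K, grestr x a ∈ T}

lemma gbasic_mem {K L : Type} [LinearOrder K] (x : K → L) (a : K) :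
    x ∈ gNbhd (grestr x a) := fun _ => rfl

lemma gbasis {K L : Type} [LinearOrder K] [Nonempty K] {U : Set (K → L)}
    (hU : TopologicalSpace.GenerateOpen {U | ∃ s : GNode K L, U = gNbhd s} U) :
    ∀ x ∈ U, ∃ a : K, gNbhd (grestr x a) ⊆ U := by
  induction hU with
  | basic V hV =>
    obtain ⟨σ, rfl⟩ := hV
    intro x hx
    exact ⟨σ.1, fun y hy i => (hx i).trans (hy i)⟩
  | univ =>
    intro x _
    exact ⟨Classical.arbitrary K, fun y _ => trivial⟩
  | inter V W hV hW ihV ihW =>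
    intro x hx
    obtain ⟨a, ha⟩ := ihV x hx.1
    obtain ⟨b, hb⟩ := ihW x hx.2
    exact ⟨max a b,
      fun y hy => ⟨ha fun i => hy ⟨i.1, lt_of_lt_of_le i.2 (le_max_left a b)⟩,
        hb fun i => hy ⟨i.1, lt_of_lt_of_le i.2 (le_max_right a b)⟩⟩⟩
  | sUnion S hS ih =>
    intro x hx
    obtain ⟨V, hVS, hxV⟩ := hx
    obtain ⟨a, ha⟩ := ih V hVS x hxV
    exact ⟨a, ha.trans (Set.subset_sUnion_of_mem hVS)⟩

/-- (Cantor–Bendixson for `^κκ`.)  If `κ` is an infinite regular cardinal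
(`K` a well-order of type `κ.ord`) and `E ⊆ ^κκ` is closed, then there is `X ⊆ E` of
cardinality at most `κ^{<κ}` such that `E \ X` is perfect (closed with no isolated
points), possibly empty. -/
theorem statement1 (κ : Cardinal) (hκ : κ.IsRegular)
    (K : Type) [LinearOrder K] [IsWellOrder K (· < ·)]
    (hK : Ordinal.type ((· < ·) : K → K → Prop) = κ.ord)
    (E : Set (K → K)) (hE : IsClosed[gtopo K K] E) :
    ∃ X ⊆ E, #X ≤ κ ^< κ ∧ @Perfect (K → K) (gtopo K K) (E \ X) := by
  classical
  letI t : TopologicalSpace (K → K) := gtopo K K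
  have hKcard : #K = κ := by
    have h1 : (Ordinal.type ((· < ·) : K → K → Prop)).card = #K := Ordinal.card_type _
    rw [hK, Cardinal.card_ord] at h1
    exact h1.symm
  have hκinf : aleph0 ≤ κ := hκ.aleph0_le
  have hne : Nonempty K := by
    rw [← Cardinal.mk_ne_zero_iff, hKcard]
    exact (Cardinal.aleph0_pos.trans_le hκinf).ne'
  have hκle : κ ≤ κ ^< κ := by
    have := Cardinal.le_powerlt (b := κ) κ (one_lt_aleph0.trans_le hκinf)
    rwa [Cardinal.power_one] at this
  have hinf : aleph0 ≤ κ ^< κ := hκinf.trans hκle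
  -- cardinality of nodes
  have hIio : ∀ a : K, #(Set.Iio a) < κ := by
    intro a
    have h1 := Ordinal.card_typein (r := ((· < ·) : K → K → Prop)) a
    have h2 : Ordinal.typein ((· < ·) : K → K → Prop) a < κ.ord := by
      rw [← hK]; exact Ordinal.typein_lt_type _ a
    rw [Cardinal.lt_ord, h1] at h2
    exact h2
  have hnodes : #(GNode K K) ≤ κ ^< κ := by
    have h1 : #(GNode K K) = Cardinal.sum fun a : K => #(Set.Iio a → K) :=
      Cardinal.mk_sigma _
    have h2 : ∀ a : K, #(Set.Iio a → K) ≤ κ ^< κ := by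
      intro a
      have : #(Set.Iio a → K) = κ ^ #(Set.Iio a) := by
        rw [← Cardinal.power_def, hKcard]
      rw [this]
      exact Cardinal.le_powerlt κ (hIio a)
    calc #(GNode K K) = Cardinal.sum fun a : K => #(Set.Iio a → K) := h1
      _ ≤ Cardinal.sum fun _ : K => κ ^< κ := Cardinal.sum_le_sum _ _ h2
      _ = #K * (κ ^< κ) := Cardinal.sum_const' _ _
      _ ≤ (κ ^< κ) * (κ ^< κ) := by
          rw [hKcard]; exact mul_le_mul_left hκle _
      _ = κ ^< κ := Cardinal.mul_eq_self hinf
  -- the small-neighborhood points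
  set S : Set (GNode K K) := {σ | #(gNbhd σ ∩ E : Set (K → K)) ≤ κ ^< κ} with hS
  set V : Set (K → K) := ⋃ σ ∈ S, gNbhd σ with hV
  have hVopen : IsOpen[gtopo K K] V := by
    refine isOpen_biUnion fun σ _ => ?_
    exact TopologicalSpace.GenerateOpen.basic _ ⟨σ, rfl⟩
  have hXcard : #(E ∩ V : Set (K → K)) ≤ κ ^< κ := by
    have hsub : E ∩ V ⊆ ⋃ σ : S, (gNbhd σ.1 ∩ E) := by
      rintro x ⟨hxE, hxV⟩
      obtain ⟨σ, hσS, hmem⟩ := Set.mem_iUnion₂.1 hxV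
      exact Set.mem_iUnion.2 ⟨⟨σ, hσS⟩, ⟨hmem, hxE⟩⟩
    calc #(E ∩ V : Set (K → K)) ≤ #(⋃ σ : S, (gNbhd σ.1 ∩ E) : Set (K → K)) :=
          Cardinal.mk_le_mk_of_subset hsub
      _ ≤ Cardinal.sum fun σ : S => #(gNbhd σ.1 ∩ E : Set (K → K)) :=
          Cardinal.mk_iUnion_le_sum_mk
      _ ≤ Cardinal.sum fun _ : S => κ ^< κ := Cardinal.sum_le_sum _ _ fun σ => σ.2
      _ = #S * (κ ^< κ) := Cardinal.sum_const' _ _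
      _ ≤ (κ ^< κ) * (κ ^< κ) := by
          exact mul_le_mul_left ((Cardinal.mk_set_le S).trans hnodes) _
      _ = κ ^< κ := Cardinal.mul_eq_self hinf
  refine ⟨E ∩ V, Set.inter_subset_left, hXcard, ?_⟩
  · have hdiff : E \ (E ∩ V) = E ∩ Vᶜ := by
      rw [Set.diff_self_inter, Set.diff_eq]
    constructor
    · -- closed
      rw [hdiff]
      exact hE.inter (isClosed_compl_iff.2 hVopen)
    · -- preperfect
      intro x hx
      rw [accPt_iff_nhds]
      intro U hU
      obtain ⟨O, hOU, hOopen, hxO⟩ := mem_nhds_iff.1 hU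
      obtain ⟨a, ha⟩ := gbasis (K := K) (L := K) hOopen x hxO
      set N : Set (K → K) := gNbhd (grestr x a) with hN
      have hxE : x ∈ E := hx.1
      have hxnV : x ∉ V := fun h => hx.2 ⟨hxE, h⟩
      have hbig : ¬ #(N ∩ E : Set (K → K)) ≤ κ ^< κ := by
        intro hle
        exact hxnV (Set.mem_biUnion (show grestr x a ∈ S from hle) (gbasic_mem x a))
      by_contra hcon
      push_neg at hcon
      have hsub2 : N ∩ E ⊆ {x} ∪ (E ∩ V) := by
        rintro y ⟨hyN, hyE⟩
        by_cases hyV : y ∈ V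
        · exact Or.inr ⟨hyE, hyV⟩
        · left
          have hyU : y ∈ U := hOU (ha hyN)
          have : y ∈ E \ (E ∩ V) := ⟨hyE, fun h => hyV h.2⟩
          have := hcon y ⟨hyU, this⟩
          simpa using this
      apply hbig
      calc #(N ∩ E : Set (K → K)) ≤ #({x} ∪ (E ∩ V) : Set (K → K)) :=
            Cardinal.mk_le_mk_of_subset hsub2
        _ ≤ #({x} : Set (K → K)) + #(E ∩ V : Set (K → K)) := Cardinal.mk_union_le _ _
        _ ≤ 1 + (κ ^< κ) :=
            add_le_add (le_of_eq (Cardinal.mk_singleton x)) hXcard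
        _ ≤ (κ ^< κ) + (κ ^< κ) :=
            add_le_add (one_le_aleph0.trans hinf) le_rfl
        _ = κ ^< κ := Cardinal.add_eq_self hinf
end

section
/- Let κ be an infinite regular cardinal with κ^{<κ} = κ. Then every closed subset E of ^κκ satisfies the ω-perfect set property: either |E| ≤ κ or E contains a nonempty perfect subset (a nonempty closed set with no isolated points). -/
open Cardinal Set Topology

/-- If `κ` is an infinite regular cardinal with `κ^{<κ} = κ` then every
closed `E ⊆ ^κκ` satisfies the ω-perfect set property: `|E| ≤ κ` or `E` contains a
nonempty perfect subset. -/
theorem statement2 (κ : Cardinal) (hκ : κ.IsRegular) (hpl : κ ^< κ = κ)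
    (K : Type) [LinearOrder K] [IsWellOrder K (· < ·)]
    (hK : Ordinal.type ((· < ·) : K → K → Prop) = κ.ord)
    (E : Set (K → K)) (hE : IsClosed[gtopo K K] E) :
    #E ≤ κ ∨ ∃ C ⊆ E, C.Nonempty ∧ @Perfect (K → K) (gtopo K K) C := by
  letI : TopologicalSpace (K → K) := gtopo K K
  have hκinf : ℵ₀ ≤ κ := hκ.aleph0_le
  have hKcard : #K = κ := by
    rw [← Ordinal.card_type ((· < ·) : K → K → Prop), hK, Cardinal.card_ord]
  have hKne : Nonempty K := by
    rw [← Cardinal.mk_ne_zero_iff, hKcard]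
    exact hκ.pos.ne'
  -- cardinality of initial segments
  have hIio : ∀ a : K, #(Set.Iio a) < κ := by
    intro a
    have h1 : #(Set.Iio a) = (Ordinal.typein ((· < ·) : K → K → Prop) a).card :=
      @Ordinal.card_typein K (· < ·) _ a
    rw [h1, ← Cardinal.lt_ord, ← hK]
    exact Ordinal.typein_lt_type _ a
  -- cardinality of the set of nodes
  have hNode : #(GNode K K) ≤ κ := by
    calc #(GNode K K) = Cardinal.sum fun a : K => #(Set.Iio a → K) := Cardinal.mk_sigma _
      _ ≤ Cardinal.sum fun _ : K => κ := by
          refine Cardinal.sum_le_sum _ _ fun a => ?_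
          have : #(Set.Iio a → K) = κ ^ #(Set.Iio a) := by
            rw [← hKcard]; exact (Cardinal.power_def K (Set.Iio a)).symm
          rw [this]
          exact (Cardinal.le_powerlt κ (hIio a)).trans hpl.le
      _ = #K * κ := Cardinal.sum_const' K κ
      _ = κ := by rw [hKcard]; exact Cardinal.mul_eq_self hκinf
  -- the basic sets form a basis
  have hbasis : TopologicalSpace.IsTopologicalBasis
      {U : Set (K → K) | ∃ s : GNode K K, U = gNbhd s} := by
    refine ⟨?_, ?_, rfl⟩
    · rintro t₁ ⟨σ, rfl⟩ t₂ ⟨τ, rfl⟩ x ⟨hx₁, hx₂⟩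
      refine ⟨gNbhd (grestr x (max σ.1 τ.1)), ⟨_, rfl⟩, fun i => rfl,
        Set.subset_inter ?_ ?_⟩
      · intro y hy i
        have := hy ⟨i.1, lt_of_lt_of_le i.2 (le_max_left _ _)⟩
        exact (hx₁ i).trans this
      · intro y hy i
        have := hy ⟨i.1, lt_of_lt_of_le i.2 (le_max_right _ _)⟩
        exact (hx₂ i).trans this
    · refine Set.eq_univ_of_forall fun x => ?_
      exact ⟨gNbhd (grestr x (Classical.arbitrary K)), ⟨_, rfl⟩, fun i => rfl⟩
  -- the union of small basic sets
  classical
  set T : Set (GNode K K) := {σ | #(gNbhd σ ∩ E : Set (K → K)) ≤ κ} with hT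
  set U : Set (K → K) := ⋃ σ : T, gNbhd σ.1 with hU
  have hUopen : IsOpen U :=
    isOpen_iUnion fun σ => TopologicalSpace.GenerateOpen.basic _ ⟨σ.1, rfl⟩
  have hEU : #(E ∩ U : Set (K → K)) ≤ κ := by
    have hsub : (E ∩ U : Set (K → K)) ⊆ ⋃ σ : T, (gNbhd σ.1 ∩ E) := by
      rintro x ⟨hxE, hxU⟩
      obtain ⟨σ, hxs⟩ := Set.mem_iUnion.mp hxU
      exact Set.mem_iUnion.mpr ⟨σ, hxs, hxE⟩
    calc #(E ∩ U : Set (K → K)) ≤ #(⋃ σ : T, (gNbhd σ.1 ∩ E)) :=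
          Cardinal.mk_le_mk_of_subset hsub
      _ ≤ #T * ⨆ σ : T, #(gNbhd σ.1 ∩ E : Set (K → K)) := Cardinal.mk_iUnion_le _
      _ ≤ κ * κ := by
          refine mul_le_mul' ((Cardinal.mk_le_mk_of_subset (Set.subset_univ T)).trans ?_)
            (ciSup_le' fun σ => σ.2)
          rw [Cardinal.mk_univ]; exact hNode
      _ = κ := Cardinal.mul_eq_self hκinf
  set C : Set (K → K) := E \ U with hC
  have hCclosed : IsClosed C := hE.sdiff hUopen
  -- key: no isolated points in C
  have hkey : ∀ x ∈ C, ∀ V ∈ 𝓝 x, ∃ y ∈ V ∩ C, y ≠ x := by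
    intro x hx V hV
    obtain ⟨s, ⟨σ, rfl⟩, hxs, hsV⟩ := hbasis.mem_nhds_iff.mp hV
    have hσ : σ ∉ T := by
      intro hσT
      exact hx.2 (Set.mem_iUnion.mpr ⟨⟨σ, hσT⟩, hxs⟩)
    have hbig : κ < #(gNbhd σ ∩ E : Set (K → K)) := lt_of_not_ge hσ
    by_contra hcon
    push_neg at hcon
    have hsub : (gNbhd σ ∩ E : Set (K → K)) ⊆ (E ∩ U) ∪ {x} := by
      rintro y ⟨hyσ, hyE⟩
      by_cases hyU : y ∈ U
      · exact Or.inl ⟨hyE, hyU⟩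
      · exact Or.inr (hcon y ⟨hsV hyσ, hyE, hyU⟩)
    have : #(gNbhd σ ∩ E : Set (K → K)) ≤ κ := by
      calc #(gNbhd σ ∩ E : Set (K → K)) ≤ #((E ∩ U) ∪ {x} : Set (K → K)) :=
            Cardinal.mk_le_mk_of_subset hsub
        _ ≤ #(E ∩ U : Set (K → K)) + #({x} : Set (K → K)) := Cardinal.mk_union_le _ _
        _ ≤ κ + 1 := by rw [Cardinal.mk_singleton]; exact add_le_add_left hEU 1
        _ = κ := Cardinal.add_one_eq hκinf
    exact absurd this (not_le.mpr hbig)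
  by_cases hcard : #E ≤ κ
  · exact Or.inl hcard
  · right
    refine ⟨C, Set.diff_subset, ?_, hCclosed, ?_⟩
    · rcases Set.eq_empty_or_nonempty C with hCe | hCne
      · exfalso
        apply hcard
        have : E ⊆ E ∩ U := fun y hy => ⟨hy, by
          by_contra hyU
          exact Set.eq_empty_iff_forall_notMem.mp hCe y ⟨hy, hyU⟩⟩
        exact (Cardinal.mk_le_mk_of_subset this).trans hEU
      · exact hCne
    · intro x hx
      exact accPt_iff_nhds.mpr fun V hV => hkey x hx V hV
end

section
/- Let κ be a regular uncountable cardinal that is not a strong limit cardinal, and let λ < κ be the least cardinal with 2^λ ≥ κ. Then no κ-tree T (a tree of height κ all of whose levels have size < κ) contains a copy of the complete binary tree ^{≤λ}2 of height λ+1; that is, there is no map ι : ^{≤λ}2 → T that is strictly order preserving and maps incomparable nodes to incomparable nodes. -/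
open Cardinal Set

/-- The height of a node `t` of a tree: the order type of its set of strict predecessors. -/
noncomputable def treeHt {T : Type} [PartialOrder T]
    (hwo : ∀ t : T, IsWellOrder {s : T // s < t} fun a b => (a : T) < (b : T)) (t : T) :
    Ordinal :=
  @Ordinal.type {s : T // s < t} (fun a b => (a : T) < (b : T)) (hwo t)

/-- A node of the binary tree: a function from a proper initial segment of the ordinals
to `Bool`. -/
abbrev BNode : Type 1 := Σ α : Ordinal, (Set.Iio α → Bool)

/-- The initial-segment order on binary-tree nodes. -/
def bnle (s t : BNode) : Prop :=
  ∃ h : s.1 ≤ t.1, ∀ i : Set.Iio s.1, s.2 i = t.2 ⟨i.1, lt_of_lt_of_le i.2 h⟩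

section Aux

variable {T : Type} [PartialOrder T]
  (hwo : ∀ t : T, IsWellOrder {s : T // s < t} fun a b => (a : T) < (b : T))

/-- The predecessors of `s` are an initial segment of the predecessors of `t` when `s < t`. -/
def predIso {s t : T} (h : s < t) :
    @RelIso {b : {x : T // x < t} // (b : T) < s} {x : T // x < s}
      (Subrel (fun a b : {x : T // x < t} => (a : T) < (b : T)) {b | (b : T) < s})
      (fun a b => (a : T) < (b : T)) :=
  ⟨⟨fun b => ⟨b.1.1, b.2⟩, fun x => ⟨⟨x.1, lt_trans x.2 h⟩, x.2⟩,
    fun _ => rfl, fun _ => rfl⟩, Iff.rfl⟩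

lemma treeHt_eq {s t : T} (h : s < t) :
    treeHt hwo s
      = @Ordinal.typein {x : T // x < t} (fun a b => (a : T) < (b : T)) (hwo t) ⟨s, h⟩ := by
  letI := hwo t
  letI := hwo s
  rw [← @Ordinal.type_subrel _ (fun a b : {x : T // x < t} => (a : T) < (b : T)) (hwo t) ⟨s, h⟩]
  exact @RelIso.ordinal_type_eq _ _ _ _ (hwo s)
    (inferInstanceAs (IsWellOrder _ (Subrel (fun a b : {x : T // x < t} => (a : T) < (b : T))
      (fun b => (b : T) < s)))) (predIso h).symm

lemma treeHt_lt {s t : T} (h : s < t) : treeHt hwo s < treeHt hwo t := by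
  rw [treeHt_eq hwo h]
  exact @Ordinal.typein_lt_type _ _ (hwo t) ⟨s, h⟩

lemma exists_pred (t : T) {o : Ordinal} (ho : o ≤ treeHt hwo t) :
    ∃ p, p ≤ t ∧ treeHt hwo p = o := by
  rcases eq_or_lt_of_le ho with h | h
  · exact ⟨t, le_rfl, h.symm⟩
  · obtain ⟨a, ha⟩ := @Ordinal.typein_surj _ _ (hwo t) o h
    exact ⟨a.1, le_of_lt a.2, (treeHt_eq hwo a.2).trans ha⟩

include hwo in
lemma comp_le {x y t : T} (hx : x ≤ t) (hy : y ≤ t) : x ≤ y ∨ y ≤ x := by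
  rcases eq_or_lt_of_le hx with rfl | hx'
  · exact Or.inr hy
  rcases eq_or_lt_of_le hy with rfl | hy'
  · exact Or.inl hx'.le
  haveI := hwo t
  rcases trichotomous_of (fun a b : {s : T // s < t} => (a : T) < (b : T)) ⟨x, hx'⟩ ⟨y, hy'⟩ with
    h | h | h
  · exact Or.inl h.le
  · exact Or.inl (le_of_eq (congrArg Subtype.val h))
  · exact Or.inr h.le

lemma le_of_ht_le {x y t : T} (hx : x ≤ t) (hy : y ≤ t)
    (hht : treeHt hwo x ≤ treeHt hwo y) : x ≤ y := by
  rcases comp_le hwo hx hy with h | h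
  · exact h
  · rcases eq_or_lt_of_le h with rfl | h'
    · exact le_rfl
    · exact absurd (treeHt_lt hwo h') (not_lt.mpr hht)

/-- The node of the binary tree of length `α` obtained by restricting `f`. -/
def bnode (lam : Cardinal) (α : Ordinal) (hα : α ≤ lam.ord) (f : Set.Iio lam.ord → Bool) :
    {s : BNode // s.1 ≤ lam.ord} :=
  ⟨⟨α, fun i => f ⟨i.1, lt_of_lt_of_le i.2 hα⟩⟩, hα⟩

lemma bnode_bnle (lam : Cardinal) {α β : Ordinal} (hα : α ≤ lam.ord) (hβ : β ≤ lam.ord)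
    (f : Set.Iio lam.ord → Bool) (hab : α ≤ β) :
    bnle (bnode lam α hα f).1 (bnode lam β hβ f).1 :=
  ⟨hab, fun _ => rfl⟩

end Aux

/-- Let `κ` be a regular uncountable cardinal that is not a strong
limit, and let `λ` be the least cardinal with `2^λ ≥ κ`.  Then no `κ`-tree contains a
copy of the complete binary tree `^{≤λ}2` of height `λ+1`: there is no map
`ι : ^{≤λ}2 → T` which is strictly order preserving and maps incomparable nodes to
incomparable nodes. -/
theorem statement3 (κ lam : Cardinal) (hκ : κ.IsRegular) (hunc : ℵ₀ < κ)
    (hlt : lam < κ) (hge : κ ≤ 2 ^ lam) (hmin : ∀ μ : Cardinal, μ < lam → 2 ^ μ < κ)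
    (T : Type) [PartialOrder T]
    (hwo : ∀ t : T, IsWellOrder {s : T // s < t} fun a b => (a : T) < (b : T))
    (hht : ∀ t : T, treeHt hwo t < κ.ord)
    (hlev : ∀ o : Ordinal, o < κ.ord → ∃ t : T, treeHt hwo t = o)
    (hsmall : ∀ o : Ordinal, #{t : T // treeHt hwo t = o} < κ) :
    ¬ ∃ ι : {s : BNode // s.1 ≤ lam.ord} → T,
        (∀ s t : {s : BNode // s.1 ≤ lam.ord}, bnle s.1 t.1 → s ≠ t → ι s < ι t) ∧
        (∀ s t : {s : BNode // s.1 ≤ lam.ord}, ¬ bnle s.1 t.1 → ¬ bnle t.1 s.1 →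
          ¬ (ι s ≤ ι t) ∧ ¬ (ι t ≤ ι s)) := by
  rintro ⟨ι, hmono, hinc⟩
  -- `lam` is infinite
  have hlam : ℵ₀ ≤ lam := by
    by_contra hcon
    push_neg at hcon
    have h2 : (2 : Cardinal) ^ lam < ℵ₀ :=
      Cardinal.power_lt_aleph0 (Cardinal.nat_lt_aleph0 2) hcon
    exact absurd (hge.trans_lt (h2.trans hunc)) (lt_irrefl κ)
  have hlim : Order.IsSuccLimit (lam.ord) := Cardinal.isSuccLimit_ord hlam
  -- `lift κ` is regular
  have hregl : (Cardinal.lift.{1} κ).IsRegular := by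
    constructor
    · simpa using hκ.1
    · rw [← Cardinal.lift_ord, ← Ordinal.lift_cof, hκ.cof_eq]
  -- the set of images of short nodes
  set short : Set {s : BNode // s.1 ≤ lam.ord} := {s | s.1.1 < lam.ord} with hshort_def
  have hshortκ : #short < Cardinal.lift.{1} κ := by
    have hinj : Function.Injective (fun s : short =>
        (⟨⟨s.1.1.1, s.2⟩, s.1.1.2⟩ : Σ α : Set.Iio lam.ord, (Set.Iio α.1 → Bool))) := by
      apply Function.LeftInverse.injective (g := fun p =>
        (⟨⟨⟨p.1.1, p.2⟩, p.1.2.le⟩, p.1.2⟩ : short))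
      intro s
      rfl
    have h1 : #short ≤ #(Σ α : Set.Iio lam.ord, (Set.Iio α.1 → Bool)) :=
      Cardinal.mk_le_of_injective hinj
    have h2 : #(Σ α : Set.Iio lam.ord, (Set.Iio α.1 → Bool)) < Cardinal.lift.{1} κ := by
      rw [Cardinal.mk_sigma]
      apply Cardinal.sum_lt_lift_of_isRegular.{1, 1} hregl
      · rw [Cardinal.lift_id, Ordinal.mk_Iio_ordinal, Cardinal.card_ord]
        exact Cardinal.lift_lt.2 hlt
      · intro α
        have hcard : (α.1).card < lam := Cardinal.lt_ord.1 α.2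
        have : #(Set.Iio α.1 → Bool) = Cardinal.lift.{1} (2 ^ (α.1).card) := by
          rw [Cardinal.mk_arrow, Ordinal.mk_Iio_ordinal, Cardinal.lift_uzero,
            Cardinal.mk_bool, Cardinal.lift_two_power]
          norm_num
        rw [this]
        exact Cardinal.lift_lt.2 (hmin _ hcard)
    exact h1.trans_lt h2
  set S : Set T := ι '' short with hS_def
  have hSκ : #S < κ := by
    have := Cardinal.mk_image_le_lift (f := ι) (s := short)
    rw [Cardinal.lift_uzero] at this
    exact Cardinal.lift_lt.1 (this.trans_lt hshortκ)
  -- the bound δ on heights of images of short nodes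
  set δ : Ordinal := ⨆ x : S, treeHt hwo x.1 with hδ_def
  have hbdd : BddAbove (Set.range fun x : S => treeHt hwo x.1) := by
    refine ⟨κ.ord, ?_⟩
    rintro o ⟨x, rfl⟩
    exact (hht x.1).le
  have hδ : δ < κ.ord :=
    Cardinal.iSup_lt_ord_of_isRegular hκ hSκ fun x => hht x.1
  have hδb : ∀ s : {s : BNode // s.1 ≤ lam.ord}, s.1.1 < lam.ord → treeHt hwo (ι s) ≤ δ := by
    intro s hs
    exact le_ciSup hbdd (⟨ι s, Set.mem_image_of_mem ι hs⟩ : S)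
  -- the target level set is small
  have hTarget : #{t : T // treeHt hwo t ≤ δ} < κ := by
    have hδκ : δ + 1 < κ.ord := by
      rw [Ordinal.add_one_eq_succ]
      exact (Cardinal.isSuccLimit_ord hκ.1).succ_lt hδ
    have hinj : Function.Injective (fun t : {t : T // treeHt hwo t ≤ δ} =>
        (⟨⟨treeHt hwo t.1, t.2⟩, ⟨⟨t.1, rfl⟩⟩⟩ :
          Σ β : Set.Iic δ, ULift.{1} {x : T // treeHt hwo x = β.1})) := by
      apply Function.LeftInverse.injective (g := fun p =>
        (⟨p.2.down.1, by rw [p.2.down.2]; exact p.1.2⟩ : {t : T // treeHt hwo t ≤ δ}))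
      intro t
      rfl
    have h1 : Cardinal.lift.{1} #{t : T // treeHt hwo t ≤ δ}
        ≤ #(Σ β : Set.Iic δ, ULift.{1} {x : T // treeHt hwo x = β.1}) := by
      have := Cardinal.lift_mk_le'.mpr ⟨⟨_, hinj⟩⟩
      rwa [Cardinal.lift_uzero] at this
    have hIic : #(Set.Iic δ) = Cardinal.lift.{1} (δ + 1).card := by
      rw [← Order.Iio_succ δ, ← Ordinal.add_one_eq_succ]
      exact Ordinal.mk_Iio_ordinal _
    have h2 : #(Σ β : Set.Iic δ, ULift.{1} {x : T // treeHt hwo x = β.1})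
        < Cardinal.lift.{1} κ := by
      rw [Cardinal.mk_sigma]
      apply Cardinal.sum_lt_lift_of_isRegular.{1, 1} hregl
      · rw [Cardinal.lift_id, hIic]
        exact Cardinal.lift_lt.2 (Cardinal.lt_ord.1 hδκ)
      · intro β
        rw [Cardinal.mk_uLift]
        exact Cardinal.lift_lt.2 (hsmall β.1)
    exact Cardinal.lift_lt.1 (h1.trans_lt h2)
  -- the injection from leaves into the target set
  have key : ∀ f : Set.Iio lam.ord → Bool,
      ∃ p : T, p ≤ ι (bnode lam lam.ord le_rfl f) ∧
        treeHt hwo p = min δ (treeHt hwo (ι (bnode lam lam.ord le_rfl f))) :=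
    fun f => exists_pred hwo _ (min_le_right _ _)
  choose F hF1 hF2 using key
  have hFδ : ∀ f, treeHt hwo (F f) ≤ δ := fun f => (hF2 f).le.trans (min_le_left _ _)
  -- the key comparison: the image of a short restriction of `f` lies below `F f`
  have hbelow : ∀ (f : Set.Iio lam.ord → Bool) (α : Ordinal) (hα : α + 1 < lam.ord),
      ι (bnode lam (α + 1) hα.le f) ≤ F f := by
    intro f α hα
    have hne : bnode lam (α + 1) hα.le f ≠ bnode lam lam.ord le_rfl f := by
      intro h
      exact absurd (congrArg (fun x => x.1.1) h) (ne_of_lt hα)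
    have hu : ι (bnode lam (α + 1) hα.le f) < ι (bnode lam lam.ord le_rfl f) :=
      hmono _ _ (bnode_bnle lam hα.le le_rfl f hα.le) hne
    refine le_of_ht_le hwo hu.le (hF1 f) ?_
    rw [hF2]
    exact le_min (hδb _ hα) (treeHt_lt hwo hu).le
  have hinjF : Function.Injective (fun f : Set.Iio lam.ord → Bool =>
      (⟨F f, hFδ f⟩ : {t : T // treeHt hwo t ≤ δ})) := by
    intro f g hfg
    have hFfg : F f = F g := congrArg Subtype.val hfg
    by_contra hne
    obtain ⟨i, hi⟩ := Function.ne_iff.mp hne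
    have hα1 : i.1 + 1 < lam.ord := by
      rw [Ordinal.add_one_eq_succ]; exact hlim.succ_lt i.2
    have hii : i.1 < i.1 + 1 := by
      rw [Ordinal.add_one_eq_succ]; exact Order.lt_succ _
    have hnb1 : ¬ bnle (bnode lam (i.1 + 1) hα1.le f).1 (bnode lam (i.1 + 1) hα1.le g).1 := by
      rintro ⟨h1, h2⟩
      exact hi (h2 ⟨i.1, hii⟩)
    have hnb2 : ¬ bnle (bnode lam (i.1 + 1) hα1.le g).1 (bnode lam (i.1 + 1) hα1.le f).1 := by
      rintro ⟨h1, h2⟩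
      exact hi (h2 ⟨i.1, hii⟩).symm
    obtain ⟨hic1, hic2⟩ := hinc _ _ hnb1 hnb2
    rcases comp_le hwo (hbelow f i.1 hα1) (hFfg ▸ hbelow g i.1 hα1) with h | h
    · exact hic1 h
    · exact hic2 h
  -- cardinality contradiction
  have hchain : Cardinal.lift.{1} κ ≤ Cardinal.lift.{1} #{t : T // treeHt hwo t ≤ δ} := by
    have hL : #(Set.Iio lam.ord → Bool) = 2 ^ Cardinal.lift.{1} lam := by
      rw [Cardinal.mk_arrow, Ordinal.mk_Iio_ordinal, Cardinal.card_ord, Cardinal.mk_bool]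
      norm_num
    have hLe : #(Set.Iio lam.ord → Bool) ≤ Cardinal.lift.{1} #{t : T // treeHt hwo t ≤ δ} := by
      have := Cardinal.lift_mk_le'.mpr ⟨⟨_, hinjF⟩⟩
      rwa [Cardinal.lift_uzero] at this
    calc Cardinal.lift.{1} κ ≤ Cardinal.lift.{1} (2 ^ lam) := Cardinal.lift_le.2 hge
      _ = 2 ^ Cardinal.lift.{1} lam := Cardinal.lift_two_power lam
      _ = #(Set.Iio lam.ord → Bool) := hL.symm
      _ ≤ Cardinal.lift.{1} #{t : T // treeHt hwo t ≤ δ} := hLe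
  exact absurd (Cardinal.lift_lt.1 (hchain.trans_lt (Cardinal.lift_lt.2 hTarget)))
    (lt_irrefl κ)
end

section
/- Let η be a countable limit ordinal, let T be a subtree of ^{≤η}ω₁ (binary-branching not assumed) of height η+1 that does not contain a copy of ^{<ω+1}2, and let D be a countable set of cofinal branches through T↾η (elements of ^ηω₁ all of whose proper initial segments lie in T) that are not already in T. Then the tree T ∪ D still does not contain a copy of ^{<ω+1}2, where a copy means a map from ^{<ω+1}2 that is strictly order preserving and preserves incomparability. -/
open Cardinal Set

/-- The tree `^{<ω+1}2` of binary sequences of length at most `ω`. -/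
abbrev Bt : Type := List Bool ⊕ (ℕ → Bool)

/-- The initial-segment order on `^{<ω+1}2`. -/
def btLE : Bt → Bt → Prop
  | Sum.inl l, Sum.inl l' => l <+: l'
  | Sum.inl l, Sum.inr x => ∀ i : Fin l.length, l.get i = x i.1
  | Sum.inr x, Sum.inr y => x = y
  | Sum.inr _, Sum.inl _ => False

/-- A node with ordinal domain and values in `W`: an element of `^{<Ord}W`. -/
abbrev ONode (W : Type) : Type 1 := Σ α : Ordinal, (Set.Iio α → W)

/-- The initial-segment order on such nodes. -/
def onle {W : Type} (s t : ONode W) : Prop :=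
  ∃ h : s.1 ≤ t.1, ∀ i : Set.Iio s.1, s.2 i = t.2 ⟨i.1, lt_of_lt_of_le i.2 h⟩

/-- `S` contains a copy of `^{<ω+1}2`: a strictly order preserving, incomparability
preserving map from `^{<ω+1}2` into `S`. -/
def HasCopy {W : Type} (S : Set (ONode W)) : Prop :=
  ∃ ι : Bt → ONode W, (∀ s : Bt, ι s ∈ S) ∧
    (∀ s t : Bt, btLE s t → s ≠ t → onle (ι s) (ι t) ∧ ι s ≠ ι t) ∧
    (∀ s t : Bt, ¬ btLE s t → ¬ btLE t s → ¬ onle (ι s) (ι t) ∧ ¬ onle (ι t) (ι s))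

-- auxiliary lemmas

lemma onle_refl {W : Type} (s : ONode W) : onle s s := ⟨le_refl _, fun _ => rfl⟩

lemma onle_lt {W : Type} (s t : ONode W) (h : onle s t) (hne : s ≠ t) : s.1 < t.1 := by
  obtain ⟨hle, hag⟩ := h
  rcases hle.lt_or_eq with h | h
  · exact h
  · exfalso; apply hne
    obtain ⟨a, f⟩ := s; obtain ⟨b, g⟩ := t
    dsimp at h hag; subst h
    exact Sigma.ext rfl (heq_of_eq (funext fun i => hag i))

lemma lists_diff {l l' : List Bool} (h : ¬ l <+: l') (h' : ¬ l' <+: l) :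
    ∃ k, ∃ (hk : k < l.length) (hk' : k < l'.length), l[k] ≠ l'[k] := by
  by_contra hcon
  push_neg at hcon
  rcases le_total l.length l'.length with hle | hle
  · apply h
    rw [List.prefix_iff_eq_take]
    refine List.ext_getElem (by simp [hle]) ?_
    intro i h1 h2
    rw [List.getElem_take]
    exact hcon i h1 (lt_of_lt_of_le h1 hle)
  · apply h'
    rw [List.prefix_iff_eq_take]
    refine List.ext_getElem (by simp [hle]) ?_
    intro i h1 h2
    rw [List.getElem_take]
    exact (hcon i (lt_of_lt_of_le h1 hle) h1).symm

def dbit (c : ℕ → ℕ → Bool) (j : ℕ) : Bool := !(c j (2*j+1))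

def Ffun (c : ℕ → ℕ → Bool) (x : ℕ → Bool) (k : ℕ) : Bool :=
  if k % 2 = 0 then x (k/2) else dbit c (k/2)

def gl (c : ℕ → ℕ → Bool) (l : List Bool) : List Bool :=
  List.ofFn (fun i : Fin (2 * l.length) =>
    if i.1 % 2 = 0 then l[i.1 / 2]'(by have := i.2; omega) else dbit c (i.1 / 2))

lemma gl_length (c : ℕ → ℕ → Bool) (l : List Bool) : (gl c l).length = 2 * l.length := by
  simp [gl]

lemma gl_get_even (c : ℕ → ℕ → Bool) (l : List Bool) (k : ℕ) (hk : k < l.length)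
    (h : 2*k < (gl c l).length) : (gl c l)[2*k] = l[k] := by
  simp only [gl, List.getElem_ofFn]
  have h1 : 2*k % 2 = 0 := by omega
  have h2 : 2*k / 2 = k := by omega
  simp [h1, h2]

lemma gl_get_odd (c : ℕ → ℕ → Bool) (l : List Bool) (k : ℕ)
    (h : 2*k+1 < (gl c l).length) : (gl c l)[2*k+1] = dbit c k := by
  simp only [gl, List.getElem_ofFn]
  have h1 : (2*k+1) % 2 = 1 := by omega
  have h2 : (2*k+1) / 2 = k := by omega
  simp [h1, h2]

lemma Ffun_even (c : ℕ → ℕ → Bool) (x : ℕ → Bool) (k : ℕ) : Ffun c x (2*k) = x k := by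
  have h1 : 2*k % 2 = 0 := by omega
  have h2 : 2*k / 2 = k := by omega
  simp [Ffun, h1, h2]

lemma Ffun_odd (c : ℕ → ℕ → Bool) (x : ℕ → Bool) (k : ℕ) : Ffun c x (2*k+1) = dbit c k := by
  have h1 : (2*k+1) % 2 = 1 := by omega
  have h2 : (2*k+1) / 2 = k := by omega
  simp [Ffun, h1, h2]

lemma Ffun_ne (c : ℕ → ℕ → Bool) (x : ℕ → Bool) (j : ℕ) : Ffun c x ≠ c j := by
  intro h
  have := Ffun_odd c x j
  rw [h] at this
  simp [dbit] at this

def emap (c : ℕ → ℕ → Bool) : Bt → Bt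
  | Sum.inl l => Sum.inl (gl c l)
  | Sum.inr x => Sum.inr (Ffun c x)

lemma gl_prefix (c : ℕ → ℕ → Bool) {l l' : List Bool} (h : l <+: l') :
    gl c l <+: gl c l' := by
  rw [List.prefix_iff_eq_take]
  refine List.ext_getElem ?_ ?_
  · rw [List.length_take, gl_length, gl_length]
    have := h.length_le
    omega
  · intro i h1 h2
    rw [List.getElem_take]
    have hi : i < 2 * l.length := by rwa [gl_length] at h1
    have hi' : i < (gl c l').length := by rw [gl_length]; have := h.length_le; omega
    obtain ⟨m, rfl | rfl⟩ := Nat.even_or_odd' i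
    · have hm : m < l.length := by omega
      have hm' : m < l'.length := by have := h.length_le; omega
      rw [gl_get_even c l m hm h1, gl_get_even c l' m hm' hi']
      exact h.getElem hm
    · rw [gl_get_odd c l m h1, gl_get_odd c l' m hi']

lemma gl_le_F (c : ℕ → ℕ → Bool) (l : List Bool) (x : ℕ → Bool)
    (h : ∀ i : Fin l.length, l.get i = x i.1) (k : ℕ) (hk : k < (gl c l).length) :
    (gl c l)[k] = Ffun c x k := by
  have hk' : k < 2 * l.length := lt_of_lt_of_le hk (le_of_eq (gl_length c l))
  obtain ⟨m, rfl | rfl⟩ := Nat.even_or_odd' k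
  · have hm : m < l.length := by omega
    rw [gl_get_even c l m hm hk, Ffun_even]
    have := h ⟨m, hm⟩
    rwa [List.get_eq_getElem] at this
  · rw [gl_get_odd c l m hk, Ffun_odd]

lemma emap_le (c : ℕ → ℕ → Bool) {s t : Bt} (h : btLE s t) : btLE (emap c s) (emap c t) := by
  match s, t with
  | Sum.inl l, Sum.inl l' => exact gl_prefix c h
  | Sum.inl l, Sum.inr x =>
    intro j
    rw [List.get_eq_getElem]
    exact gl_le_F c l x h j.1 j.2
  | Sum.inr x, Sum.inr y =>
    have hxy : x = y := h
    show Ffun c x = Ffun c y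
    rw [hxy]
  | Sum.inr x, Sum.inl l => exact h.elim

lemma emap_ne (c : ℕ → ℕ → Bool) {s t : Bt} (h : btLE s t) (hne : s ≠ t) :
    emap c s ≠ emap c t := by
  match s, t with
  | Sum.inl l, Sum.inl l' =>
    have hp : l <+: l' := h
    have hlen : l.length < l'.length := by
      rcases lt_or_eq_of_le hp.length_le with h' | h'
      · exact h'
      · exact absurd (congrArg Sum.inl (hp.eq_of_length h')) hne
    intro heq
    have : gl c l = gl c l' := Sum.inl.inj heq
    have := congrArg List.length this
    rw [gl_length, gl_length] at this
    omega
  | Sum.inl l, Sum.inr x => simp [emap]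
  | Sum.inr x, Sum.inr y => exact absurd (congrArg Sum.inr h) hne
  | Sum.inr x, Sum.inl l => exact h.elim

lemma emap_not_le (c : ℕ → ℕ → Bool) {s t : Bt} (h1 : ¬ btLE s t) (h2 : ¬ btLE t s) :
    ¬ btLE (emap c s) (emap c t) := by
  match s, t with
  | Sum.inl l, Sum.inl l' =>
    obtain ⟨k, hk, hk', hne⟩ := lists_diff h1 h2
    intro hp
    have hp' : gl c l <+: gl c l' := hp
    have e1 : 2*k < (gl c l).length := by rw [gl_length]; omega
    have e2 : 2*k < (gl c l').length := by rw [gl_length]; omega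
    have := hp'.getElem e1
    rw [gl_get_even c l k hk e1, gl_get_even c l' k hk' e2] at this
    exact hne this
  | Sum.inl l, Sum.inr x =>
    have : ∃ i : Fin l.length, l.get i ≠ x i.1 := by
      by_contra hcon
      push_neg at hcon
      exact h1 hcon
    obtain ⟨i, hi⟩ := this
    intro hc
    have e1 : 2*i.1 < (gl c l).length := by rw [gl_length]; have := i.2; omega
    have := hc ⟨2*i.1, e1⟩
    rw [List.get_eq_getElem] at this
    rw [gl_get_even c l i.1 i.2 e1] at this
    rw [Ffun_even] at this
    apply hi
    rw [List.get_eq_getElem]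
    exact this
  | Sum.inr x, Sum.inl l => exact fun hc => hc
  | Sum.inr x, Sum.inr y =>
    have hxy : x ≠ y := h1
    intro hc
    have hFF : Ffun c x = Ffun c y := hc
    apply hxy
    funext k
    have := congrFun hFF (2*k)
    rwa [Ffun_even, Ffun_even] at this
/-- Let `η` be a countable limit ordinal, `T` a subtree of `^{≤η}ω₁` of
height `η+1` containing no copy of `^{<ω+1}2`, and let `D` be a countable set of cofinal
branches through `T↾η` that are not already in `T`.  Then `T ∪ D` still contains no copy
of `^{<ω+1}2`. -/
theorem statement8 (W : Type) (hW : #W = aleph 1)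
    (η : Ordinal) (hηlim : Order.IsSuccLimit η) (hηct : η.card ≤ ℵ₀)
    (T : Set (ONode W))
    (hdom : ∀ s ∈ T, s.1 ≤ η)
    (htree : ∀ s t : ONode W, onle s t → t ∈ T → s ∈ T)
    (hheight : ∀ α : Ordinal, α ≤ η → ∃ s ∈ T, s.1 = α)
    (hnocopy : ¬ HasCopy T)
    (D : Set ((Set.Iio η) → W)) (hDct : D.Countable)
    (hDbr : ∀ b ∈ D, ∀ α : Ordinal, ∀ hα : α < η,
      (⟨α, fun i => b ⟨i.1, lt_trans i.2 hα⟩⟩ : ONode W) ∈ T)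
    (hDnew : ∀ b ∈ D, (⟨η, b⟩ : ONode W) ∉ T) :
    ¬ HasCopy (T ∪ {s : ONode W | ∃ b ∈ D, s = ⟨η, b⟩}) := by
  rintro ⟨ι, hmem, hord, hinc⟩
  set Dset : Set (ONode W) := {s : ONode W | ∃ b ∈ D, s = ⟨η, b⟩} with hDset
  -- every element of T ∪ Dset has domain ≤ η
  have hdom' : ∀ s ∈ T ∪ Dset, s.1 ≤ η := by
    rintro s (hs | ⟨b, hb, rfl⟩)
    · exact hdom s hs
    · exact le_refl η
  -- images of finite sequences lie in T
  have hfin : ∀ l : List Bool, ι (Sum.inl l) ∈ T := by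
    intro l
    rcases hmem (Sum.inl l) with h | h
    · exact h
    · exfalso
      obtain ⟨b, hb, heq⟩ := h
      have hbt : btLE (Sum.inl l) (Sum.inl (l ++ [true])) := List.prefix_append l [true]
      have hne : (Sum.inl l : Bt) ≠ Sum.inl (l ++ [true]) := by
        intro h
        have := congrArg (fun s : Bt => match s with | Sum.inl m => m.length | Sum.inr _ => 0) h
        simp at this
      obtain ⟨ho, hne'⟩ := hord _ _ hbt hne
      have hlt := onle_lt _ _ ho hne'
      rw [heq] at hlt
      exact absurd hlt (not_lt.mpr (hdom' _ (hmem (Sum.inl (l ++ [true])))))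
  -- ι on branches is injective
  have hinj : Function.Injective (fun y : ℕ → Bool => ι (Sum.inr y)) := by
    intro x y hxy
    by_contra hne
    have h1 : ¬ btLE (Sum.inr x) (Sum.inr y) := hne
    have h2 : ¬ btLE (Sum.inr y) (Sum.inr x) := fun h => hne h.symm
    have := (hinc _ _ h1 h2).1
    simp only at hxy
    rw [hxy] at this
    exact this (onle_refl _)
  -- the bad set of branches is countable
  have hDsetct : Dset.Countable := by
    have himg := hDct.image (fun b => (⟨η, b⟩ : ONode W))
    have : Dset = (fun b => (⟨η, b⟩ : ONode W)) '' D := by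
      ext s
      simp only [hDset, Set.mem_setOf_eq, Set.mem_image]
      constructor
      · rintro ⟨b, hb, rfl⟩; exact ⟨b, hb, rfl⟩
      · rintro ⟨b, hb, rfl⟩; exact ⟨b, hb, rfl⟩
    rw [this]; exact himg
  have hbadct : {y : ℕ → Bool | ι (Sum.inr y) ∉ T}.Countable := by
    refine Set.Countable.mono ?_ (hDsetct.preimage hinj)
    intro y hy
    rcases hmem (Sum.inr y) with h | h
    · exact absurd h hy
    · exact h
  obtain ⟨c, hc⟩ := Set.countable_iff_exists_subset_range.mp hbadct
  -- the composed map is a copy inside T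
  apply hnocopy
  refine ⟨fun s => ι (emap c s), ?_, ?_, ?_⟩
  · intro s
    match s with
    | Sum.inl l => exact hfin (gl c l)
    | Sum.inr x =>
      by_contra hnot
      have : Ffun c x ∈ Set.range c := hc hnot
      obtain ⟨j, hj⟩ := this
      exact Ffun_ne c x j hj.symm
  · intro s t h hne
    exact hord _ _ (emap_le c h) (emap_ne c h hne)
  · intro s t h1 h2
    exact hinc _ _ (emap_not_le c h1 h2) (emap_not_le c h2 h1)
end

section
/- Suppose the Continuum Hypothesis fails (2^{ℵ₀} > ℵ₁). Then every full, splitting, normal tree T of height ω₁ has at least 2^{ℵ₀}-many cofinal branches. In particular, under ¬CH it has more than ω₁-many cofinal branches. -/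
open Cardinal Set

/-- `b` is a vanishing branch of length `o` through the tree `T`: a downward closed
chain meeting every level below `o` and having no upper bound at level `o`. -/
def VanishingBranch {T : Type} [PartialOrder T]
    (hwo : ∀ t : T, IsWellOrder {s : T // s < t} fun a b => (a : T) < (b : T))
    (b : Set T) (o : Ordinal) : Prop :=
  IsChain (· ≤ ·) b ∧ (∀ t ∈ b, treeHt hwo t < o) ∧
    (∀ s t : T, t ∈ b → s ≤ t → s ∈ b) ∧
    (∀ o' : Ordinal, o' < o → ∃ t ∈ b, treeHt hwo t = o') ∧
    ¬ ∃ t : T, treeHt hwo t = o ∧ ∀ s ∈ b, s ≤ t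

/-- `b` is a cofinal branch of a tree of height `ω₁`: a maximal (equivalently, downward
closed) chain meeting every countable level. -/
def CofinalBranch {T : Type} [PartialOrder T]
    (hwo : ∀ t : T, IsWellOrder {s : T // s < t} fun a b => (a : T) < (b : T))
    (b : Set T) : Prop :=
  IsChain (· ≤ ·) b ∧ (∀ s t : T, t ∈ b → s ≤ t → s ∈ b) ∧
    ∀ o : Ordinal, o < (aleph 1).ord → ∃ t ∈ b, treeHt hwo t = o

/-! ### Auxiliary lemmas -/

theorem treeHt_eq_typein {T : Type} [PartialOrder T]
    (hwo : ∀ t : T, IsWellOrder {s : T // s < t} fun a b => (a : T) < (b : T))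
    {s t : T} (h : s < t) :
    treeHt hwo s =
      @Ordinal.typein {r : T // r < t} (fun a b => (a : T) < (b : T)) (hwo t) ⟨s, h⟩ := by
  haveI := hwo t
  rw [← Ordinal.type_subrel]
  refine Ordinal.type_eq.2 ⟨?_⟩
  exact
    { toFun := fun a => ⟨⟨a.1, lt_trans a.2 h⟩, a.2⟩
      invFun := fun b => ⟨b.1.1, b.2⟩
      left_inv := fun a => rfl
      right_inv := fun b => rfl
      map_rel_iff' := Iff.rfl }

theorem treeHt_lt_of_lt {T : Type} [PartialOrder T]
    (hwo : ∀ t : T, IsWellOrder {s : T // s < t} fun a b => (a : T) < (b : T))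
    {s t : T} (h : s < t) : treeHt hwo s < treeHt hwo t := by
  haveI := hwo t
  rw [treeHt_eq_typein hwo h]
  exact Ordinal.typein_lt_type _ _

theorem exists_pred_of_lt_treeHt {T : Type} [PartialOrder T]
    (hwo : ∀ t : T, IsWellOrder {s : T // s < t} fun a b => (a : T) < (b : T))
    {t : T} {o : Ordinal} (h : o < treeHt hwo t) :
    ∃ s : T, s < t ∧ treeHt hwo s = o := by
  haveI := hwo t
  obtain ⟨a, ha⟩ := Ordinal.typein_surj (fun a b : {s : T // s < t} => (a : T) < (b : T)) h
  exact ⟨a.1, a.2, (treeHt_eq_typein hwo a.2).trans ha⟩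

/-- predecessors of a common element are comparable -/
theorem preds_comparable {T : Type} [PartialOrder T]
    (hwo : ∀ t : T, IsWellOrder {s : T // s < t} fun a b => (a : T) < (b : T))
    {r s t : T} (hr : r < t) (hs : s < t) : r ≤ s ∨ s ≤ r := by
  haveI := hwo t
  rcases trichotomous_of (r := fun a b : {x : T // x < t} => (a : T) < (b : T)) ⟨r, hr⟩ ⟨s, hs⟩ with h | h | h
  · exact Or.inl (le_of_lt h)
  · exact Or.inl (le_of_eq congr(($h).1))
  · exact Or.inr (le_of_lt h)

/-- a maximal chain is downward closed -/
theorem maxChain_dc {T : Type} [PartialOrder T]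
    (hwo : ∀ t : T, IsWellOrder {s : T // s < t} fun a b => (a : T) < (b : T))
    {m : Set T} (hm : IsMaxChain (· ≤ ·) m) {s t : T} (ht : t ∈ m) (hst : s ≤ t) : s ∈ m := by
  rcases eq_or_lt_of_le hst with rfl | hlt
  · exact ht
  have hch : IsChain (· ≤ ·) (insert s m) := by
    refine hm.1.insert fun r hr hne => ?_
    rcases eq_or_ne r t with rfl | hrt
    · exact Or.inl hst
    rcases hm.1 hr ht hrt with h | h
    · rcases eq_or_lt_of_le h with rfl | h
      · exact Or.inl hst
      · rcases preds_comparable hwo hlt h with h' | h'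
        · exact Or.inl h'
        · exact Or.inr h'
    · exact Or.inl (hst.trans h)
  have := hm.2 hch (subset_insert s m)
  rw [this]; exact mem_insert s m

/-- a maximal chain containing a node of height zero is either a cofinal branch or a
vanishing branch at some countable limit level -/
theorem dichotomy {T : Type} [PartialOrder T]
    (hwo : ∀ t : T, IsWellOrder {s : T // s < t} fun a b => (a : T) < (b : T))
    (hext : ∀ s : T, ∀ β : Ordinal, treeHt hwo s < β → β < (aleph 1).ord →
      ∃ t : T, treeHt hwo t = β ∧ s < t)
    {m : Set T} (hm : IsMaxChain (· ≤ ·) m)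
    {r₀ : T} (hr₀ : r₀ ∈ m) (hr₀ht : treeHt hwo r₀ = 0) :
    CofinalBranch hwo m ∨
      ∃ o : Ordinal, Order.IsSuccLimit o ∧ o < (aleph 1).ord ∧ VanishingBranch hwo m o := by
  by_cases hcof : ∀ o : Ordinal, o < (aleph 1).ord → ∃ t ∈ m, treeHt hwo t = o
  · exact Or.inl ⟨hm.1, fun s t ht hst => maxChain_dc hwo hm ht hst, hcof⟩
  push_neg at hcof
  obtain ⟨o₀, ho₀lt, ho₀⟩ := hcof
  set U : Set Ordinal := {o | o < (aleph 1).ord ∧ ¬ ∃ t ∈ m, treeHt hwo t = o} with hU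
  have hUne : U.Nonempty := ⟨o₀, ho₀lt, by push_neg; exact ho₀⟩
  set o := sInf U with ho
  have hoU : o ∈ U := csInf_mem hUne
  have homin : ∀ o' < o, o' ∉ U := fun o' h h' =>
    absurd (csInf_le (OrderBot.bddBelow U) h') (not_le.2 h)
  have hreal : ∀ o' < o, ∃ t ∈ m, treeHt hwo t = o' := by
    intro o' h
    have := homin o' h
    rw [hU] at this
    simp only [Set.mem_setOf_eq, not_and, not_not] at this
    exact this (h.trans hoU.1)
  have hlto : ∀ t ∈ m, treeHt hwo t < o := by
    intro t ht
    by_contra hle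
    rcases eq_or_lt_of_le (not_lt.1 hle) with heq | hlt
    · exact hoU.2 ⟨t, ht, heq.symm⟩
    · obtain ⟨s, hst, hs⟩ := exists_pred_of_lt_treeHt hwo hlt
      exact hoU.2 ⟨s, maxChain_dc hwo hm ht hst.le, hs⟩
  have hne0 : o ≠ 0 := by
    intro h
    have := hlto r₀ hr₀
    rw [h, hr₀ht] at this
    exact absurd this (lt_irrefl 0)
  have hnsucc : ∀ a, o ≠ Order.succ a := by
    intro a h
    obtain ⟨t, htm, hta⟩ := hreal a (h ▸ Order.lt_succ a)
    obtain ⟨t', ht', htt'⟩ := hext t (a + 1)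
      (by rw [hta, Ordinal.add_one_eq_succ]; exact Order.lt_succ a)
      (by rw [Ordinal.add_one_eq_succ, ← h]; exact hoU.1)
    have hch : IsChain (· ≤ ·) (insert t' m) := by
      refine hm.1.insert fun r hr hne => ?_
      have hrle : r ≤ t := by
        rcases eq_or_ne r t with rfl | hrt
        · exact le_rfl
        rcases hm.1 hr htm hrt with hc | hc
        · exact hc
        · rcases eq_or_lt_of_le hc with rfl | hc
          · exact le_rfl
          · exfalso
            have h1 := treeHt_lt_of_lt hwo hc
            have h2 := hlto r hr
            rw [hta] at h1
            rw [h] at h2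
            have : treeHt hwo r ≤ a := Order.lt_succ_iff.1 h2
            exact absurd (lt_of_lt_of_le h1 this) (lt_irrefl a)
      exact Or.inr (hrle.trans htt'.le)
    have := hm.2 hch (subset_insert t' m)
    have ht'm : t' ∈ m := this ▸ mem_insert t' m
    exact hoU.2 ⟨t', ht'm, by rw [ht', Ordinal.add_one_eq_succ, h]⟩
  have holim : Order.IsSuccLimit o := by
    rcases Ordinal.zero_or_succ_or_isSuccLimit o with h | ⟨a, h⟩ | h
    · exact absurd h hne0
    · exact absurd h.symm (hnsucc a)
    · exact h
  refine Or.inr ⟨o, holim, hoU.1, hm.1, hlto,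
    fun s t ht hst => maxChain_dc hwo hm ht hst, hreal, ?_⟩
  rintro ⟨t, hto, hub⟩
  have htm : t ∉ m := fun h => hoU.2 ⟨t, h, hto⟩
  have hch : IsChain (· ≤ ·) (insert t m) := hm.1.insert fun r hr _ => Or.inr (hub r hr)
  exact htm ((hm.2 hch (subset_insert t m)) ▸ mem_insert t m)

/-- Assume `¬CH`, i.e. `ℵ₁ < 2^{ℵ₀}`.  Then every full, splitting,
normal tree of height `ω₁` has at least `2^{ℵ₀}`-many cofinal branches; in particular it
has more than `ω₁`-many cofinal branches. -/
theorem statement15 (hCH : aleph 1 < 2 ^ (ℵ₀ : Cardinal))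
    (T : Type) [PartialOrder T]
    (hwo : ∀ t : T, IsWellOrder {s : T // s < t} fun a b => (a : T) < (b : T))
    -- `T` has height `ω₁`
    (hht : ∀ t : T, treeHt hwo t < (aleph 1).ord)
    (hlev : ∀ o : Ordinal, o < (aleph 1).ord → ∃ t : T, treeHt hwo t = o)
    -- `T` is normal
    (hext : ∀ s : T, ∀ β : Ordinal, treeHt hwo s < β → β < (aleph 1).ord →
      ∃ t : T, treeHt hwo t = β ∧ s < t)
    (hlim : ∀ s t : T, treeHt hwo s = treeHt hwo t → Order.IsSuccLimit (treeHt hwo s) →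
      (∀ r : T, r < s ↔ r < t) → s = t)
    -- `T` is splitting: every node has two incomparable immediate successors
    (hsplit : ∀ t : T, ∃ s₁ s₂ : T, t < s₁ ∧ t < s₂ ∧
      treeHt hwo s₁ = treeHt hwo t + 1 ∧ treeHt hwo s₂ = treeHt hwo t + 1 ∧
      ¬ s₁ ≤ s₂ ∧ ¬ s₂ ≤ s₁)
    -- `T` is full: at most one vanishing branch at every countable limit level
    (hfull : ∀ o : Ordinal, Order.IsSuccLimit o → o < (aleph 1).ord →
      ∀ b b' : Set T, VanishingBranch hwo b o → VanishingBranch hwo b' o → b = b') :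
    2 ^ (ℵ₀ : Cardinal) ≤ #{b : Set T // CofinalBranch hwo b} ∧
      aleph 1 < #{b : Set T // CofinalBranch hwo b} := by
  have hCH0 : (Cardinal.aleph 1 : Cardinal.{0}) < 2 ^ (ℵ₀ : Cardinal.{0}) := by
    have h := hCH
    rw [show (2 : Cardinal) ^ (ℵ₀ : Cardinal) = Cardinal.lift (2 ^ (ℵ₀ : Cardinal.{0})) by
        rw [Cardinal.lift_two_power, Cardinal.lift_aleph0],
      show Cardinal.aleph 1 = Cardinal.lift (Cardinal.aleph (1 : Ordinal.{0})) by
        rw [Cardinal.lift_aleph, Ordinal.lift_one],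
      Cardinal.lift_lt] at h
    exact h
  have h0 : (0 : Ordinal) < (aleph 1).ord := by
    rw [Cardinal.lt_ord, Ordinal.card_zero]
    exact aleph_pos 1
  obtain ⟨root, hroot⟩ := hlev 0 h0
  choose s1 s2 hlt1 hlt2 _h3 _h4 hns12 hns21 using hsplit
  -- the binary splitting chains
  let c : (ℕ → Bool) → ℕ → T := fun x n =>
    Nat.rec root (fun k p => if x k then s1 p else s2 p) n
  have hc0 : ∀ x, c x 0 = root := fun _ => rfl
  have hcs : ∀ x n, c x (n + 1) = if x n then s1 (c x n) else s2 (c x n) := fun _ _ => rfl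
  have hmono : ∀ x, StrictMono (c x) := by
    intro x
    apply strictMono_nat_of_lt_succ
    intro n
    rw [hcs]
    by_cases h : x n
    · simp only [h, if_true]; exact hlt1 _
    · simp only [h, if_false]; exact hlt2 _
  have hagree : ∀ x y : ℕ → Bool, ∀ n, (∀ k < n, x k = y k) → c x n = c y n := by
    intro x y n
    induction n with
    | zero => intro _; rfl
    | succ n ih =>
      intro h
      rw [hcs, hcs, ih (fun k hk => h k (hk.trans (Nat.lt_succ_self n))),
        h n (Nat.lt_succ_self n)]
  have hinc : ∀ x y : ℕ → Bool, x ≠ y →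
      ∃ n, ¬ c x (n + 1) ≤ c y (n + 1) ∧ ¬ c y (n + 1) ≤ c x (n + 1) := by
    intro x y hxy
    have hex : ∃ n, x n ≠ y n := by
      by_contra h; push_neg at h; exact hxy (funext h)
    have hn : x (Nat.find hex) ≠ y (Nat.find hex) := Nat.find_spec hex
    have heq : c x (Nat.find hex) = c y (Nat.find hex) :=
      hagree x y _ (fun k hk => not_not.1 (Nat.find_min hex hk))
    refine ⟨Nat.find hex, ?_⟩
    rw [hcs, hcs, heq]
    cases hx : x (Nat.find hex) <;> cases hy : y (Nat.find hex) <;>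
      simp only [hx, hy, Bool.false_eq_true, Bool.true_eq_false, ne_eq, not_false_eq_true,
        not_true_eq_false, if_true, if_false] at hn ⊢
    · exact ⟨hns21 _, hns12 _⟩
    · exact ⟨hns12 _, hns21 _⟩
  have hchain : ∀ x, IsChain (· ≤ ·) (Set.range (c x)) := by
    rintro x _ ⟨i, rfl⟩ _ ⟨j, rfl⟩ hne
    rcases lt_trichotomy i j with h | h | h
    · exact Or.inl ((hmono x).monotone h.le)
    · exact absurd (congrArg (c x) h) hne
    · exact Or.inr ((hmono x).monotone h.le)
  -- extend to maximal chains
  choose M hMmax hMsub using fun x => (hchain x).exists_maxChain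
  have hrootM : ∀ x, root ∈ M x := fun x => hMsub x ⟨0, rfl⟩
  have hdi := fun x => dichotomy hwo hext (hMmax x) (hrootM x) hroot
  have hMinj : ∀ x y : ℕ → Bool, x ≠ y → M x ≠ M y := by
    intro x y hxy hMeq
    obtain ⟨n, h1, h2⟩ := hinc x y hxy
    have hx : c x (n + 1) ∈ M y := hMeq ▸ hMsub x ⟨n + 1, rfl⟩
    have hy : c y (n + 1) ∈ M y := hMsub y ⟨n + 1, rfl⟩
    have hne : c x (n + 1) ≠ c y (n + 1) := fun h => h1 (h ▸ le_rfl)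
    rcases (hMmax y).1 hx hy hne with h | h
    · exact h1 h
    · exact h2 h
  set G : Set (ℕ → Bool) := {x | CofinalBranch hwo (M x)} with hG
  have hbad : ∀ x : ↥Gᶜ, ∃ o : Ordinal,
      o < (aleph 1).ord ∧ VanishingBranch hwo (M x.1) o ∧ Order.IsSuccLimit o := by
    intro x
    rcases hdi x.1 with h | ⟨o, hl, ho, hv⟩
    · exact absurd h x.2
    · exact ⟨o, ho, hv, hl⟩
  choose len hlen1 hlen2 hlen3 using hbad
  have hleninj : Function.Injective len := by
    intro a b hab
    have hMab : M a.1 = M b.1 :=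
      hfull (len a) (hlen3 a) (hlen1 a) _ _ (hlen2 a) (hab ▸ hlen2 b)
    apply Subtype.ext
    by_contra hne
    exact hMinj _ _ hne hMab
  have hbadcard : #(↥Gᶜ) ≤ aleph 1 := by
    have hemb : (↥Gᶜ) ↪ (Set.Iio (aleph 1).ord) :=
      ⟨fun x => ⟨len x, hlen1 x⟩, fun a b h => hleninj (congrArg Subtype.val h)⟩
    have h1 : Cardinal.lift.{1} #(↥Gᶜ) ≤ Cardinal.lift.{0} #(Set.Iio (aleph 1).ord) :=
      Cardinal.lift_mk_le'.2 ⟨hemb⟩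
    rw [Cardinal.lift_id', Ordinal.mk_Iio_ordinal, Cardinal.card_ord] at h1
    exact Cardinal.lift_le.1 h1
  have htot : #(↥G) + #(↥Gᶜ) = #(ℕ → Bool) := Cardinal.mk_sum_compl G
  have harrow : #(ℕ → Bool) = 2 ^ (ℵ₀ : Cardinal) := by
    rw [← Cardinal.mk_bool, ← Cardinal.mk_nat, Cardinal.power_def]
  have hGcard : 2 ^ (ℵ₀ : Cardinal) ≤ #(↥G) := by
    by_contra h
    push_neg at h
    have hlt : #(↥G) + #(↥Gᶜ) < 2 ^ (ℵ₀ : Cardinal) :=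
      Cardinal.add_lt_of_lt (Cardinal.cantor ℵ₀).le h (lt_of_le_of_lt hbadcard hCH0)
    rw [htot, harrow] at hlt
    exact lt_irrefl _ hlt
  have hembG : ↥G ↪ {b : Set T // CofinalBranch hwo b} :=
    ⟨fun x => ⟨M x.1, x.2⟩, by
      intro a b h
      apply Subtype.ext
      by_contra hne
      exact hMinj _ _ hne (congrArg Subtype.val h)⟩
  have hfin : 2 ^ (ℵ₀ : Cardinal) ≤ #{b : Set T // CofinalBranch hwo b} :=
    hGcard.trans (Cardinal.mk_le_of_injective hembG.injective)
  exact ⟨hfin, lt_of_lt_of_le hCH0 hfin⟩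
end
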